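/- Let ω₂ = P dx + Q dy be a 1-form on ℂ² whose coefficients P, Q are homogeneous polynomials of degree ν in x, y, with (P,Q) ≠ (0,0), and suppose xP + yQ is not identically zero (i.e. ω₂ does not define the radial foliation). If H and H̃ are nonzero homogeneous polynomials of the same degree N+1 ≥ 1 that are both first integrals of ker(ω₂) (i.e. dH ∧ ω₂ = 0 and dH̃ ∧ ω₂ = 0), then H and H̃ are proportional: there exists c ∈ ℂ with H = c·H̃. -/

import Mathlib

open MvPolynomial

lemma aux_mono (i : Fin 2) (m : Fin 2 →₀ ℕ) (c : ℂ) :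
    X i * pderiv i (monomial m c) = (m i : ℂ) • monomial m c := by
  rw [pderiv_monomial]
  by_cases h : m i = 0
  · simp [h]
  · have hm : Finsupp.single i 1 + (m - Finsupp.single i 1) = m := by
      ext j
      by_cases hj : j = i
      · subst hj
        simp [Finsupp.tsub_apply]; omega
      · simp [Finsupp.single_apply, hj, Ne.symm hj, Finsupp.tsub_apply]
    rw [X, monomial_mul, hm, smul_monomial, smul_eq_mul]
    ring_nf
lemma euler {n : ℕ} {f : MvPolynomial (Fin 2) ℂ} (hf : f.IsHomogeneous n) :
    X 0 * pderiv 0 f + X 1 * pderiv 1 f = C (n : ℂ) * f := by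
  conv_lhs => rw [f.as_sum, map_sum (pderiv 0), map_sum (pderiv 1)]
  rw [Finset.mul_sum, Finset.mul_sum, ← Finset.sum_add_distrib]
  conv_rhs => rw [f.as_sum, Finset.mul_sum]
  refine Finset.sum_congr rfl fun m hm => ?_
  rw [aux_mono, aux_mono]
  have hdeg : m 0 + m 1 = n := by
    have := hf (mem_support_iff.mp hm)
    rw [Finsupp.weight_apply, Finsupp.sum_fintype _ _ (by simp)] at this
    simpa [Fin.sum_univ_two] using this
  rw [← hdeg, smul_monomial, smul_monomial, C_mul_monomial, ← (monomial m).map_add]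
  congr 1
  simp only [smul_eq_mul]
  push_cast
  ring

open Polynomial in
lemma onevar {f g : Polynomial ℂ} (hf : f ≠ 0) (hg : g ≠ 0)
    (h : f * derivative g = derivative f * g) : ∃ c : ℂ, f = c • g := by
  obtain ⟨a, b, ha, hb, hu⟩ := extract_gcd f g
  set d := gcd f g with hd
  have hdne : d ≠ 0 := fun h0 => hf (by rw [ha, h0, zero_mul])
  have hane : a ≠ 0 := fun h0 => hf (by rw [ha, h0, mul_zero])
  have hbne : b ≠ 0 := fun h0 => hg (by rw [hb, h0, mul_zero])
  have hrel : IsRelPrime a b := gcd_isUnit_iff_isRelPrime.mp hu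
  have key : a * derivative b = derivative a * b := by
    have h2 : d * d * (a * derivative b) = d * d * (derivative a * b) := by
      have := h
      rw [ha, hb] at this
      rw [derivative_mul, derivative_mul] at this
      ring_nf at this ⊢
      linear_combination this
    exact mul_left_cancel₀ (mul_ne_zero hdne hdne) h2
  have hda : a ∣ derivative a := by
    refine hrel.dvd_of_dvd_mul_right (y := derivative a) ?_
    exact ⟨derivative b, by linear_combination -key⟩
  have hderiva : derivative a = 0 := by
    by_contra hne
    have h1 : a.natDegree ≤ (derivative a).natDegree := natDegree_le_of_dvd hda hne
    rcases Nat.eq_zero_or_pos a.natDegree with h0 | h0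
    · rw [eq_C_of_natDegree_eq_zero h0] at hne; simp at hne
    · exact absurd h1 (not_le.mpr (natDegree_derivative_lt (Nat.pos_iff_ne_zero.mp h0)))
  have hderivb : derivative b = 0 := by
    have : a * derivative b = 0 := by rw [key, hderiva, zero_mul]
    exact (mul_eq_zero.mp this).resolve_left hane
  obtain ⟨α, hα⟩ : ∃ α : ℂ, a = Polynomial.C α := ⟨a.coeff 0, eq_C_of_derivative_eq_zero hderiva⟩
  obtain ⟨β, hβ⟩ : ∃ β : ℂ, b = Polynomial.C β := ⟨b.coeff 0, eq_C_of_derivative_eq_zero hderivb⟩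
  have hβne : β ≠ 0 := fun h0 => hbne (by rw [hβ, h0, map_zero])
  refine ⟨α / β, ?_⟩
  rw [ha, hb, hα, hβ, Polynomial.smul_eq_C_mul]
  rw [show (Polynomial.C (α/β) : Polynomial ℂ) * (d * Polynomial.C β) = d * Polynomial.C (α / β * β) by rw [map_mul]; ring]
  rw [div_mul_cancel₀ _ hβne]

noncomputable def φ : MvPolynomial (Fin 2) ℂ →ₐ[ℂ] Polynomial ℂ :=
  aeval ![Polynomial.X, 1]

lemma phi_pderiv (K : MvPolynomial (Fin 2) ℂ) :
    φ (pderiv 0 K) = Polynomial.derivative (φ K) := by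
  induction K using MvPolynomial.induction_on with
  | C a => simp [φ]
  | add p q hp hq => simp [map_add, hp, hq]
  | mul_X p j hp =>
    rw [pderiv_mul, map_add, map_mul, map_mul, map_mul, Polynomial.derivative_mul, hp]
    fin_cases j <;> simp [φ]

lemma phi_scale {n : ℕ} {K : MvPolynomial (Fin 2) ℂ} (hK : K.IsHomogeneous n)
    (c : ℂ) (x : Fin 2 → ℂ) :
    eval (fun i => c * x i) K = c ^ n * eval x K := by
  conv_lhs => rw [K.as_sum]
  conv_rhs => rw [K.as_sum]
  rw [map_sum, map_sum, Finset.mul_sum]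
  refine Finset.sum_congr rfl fun m hm => ?_
  have hdeg : ∑ i ∈ m.support, m i = n := by
    have := hK (mem_support_iff.mp hm)
    rw [Finsupp.weight_apply] at this
    simpa [Finsupp.sum] using this
  rw [eval_monomial, eval_monomial, Finsupp.prod, Finsupp.prod]
  simp_rw [mul_pow]
  rw [Finset.prod_mul_distrib, Finset.prod_pow_eq_pow_sum, hdeg]
  ring

lemma phi_inj {n : ℕ} {K : MvPolynomial (Fin 2) ℂ} (hK : K.IsHomogeneous n)
    (h : φ K = 0) : K = 0 := by
  have heval : ∀ x : Fin 2 → ℂ, x 1 ≠ 0 → eval x K = 0 := by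
    intro x hx1
    have hxy : x = fun i => x 1 * (![x 0 / x 1, 1] i) := by
      funext i; fin_cases i <;> simp [mul_div_cancel₀, hx1, mul_comm]
    rw [hxy, phi_scale hK]
    have hcomp : eval (![x 0 / x 1, 1]) K = Polynomial.eval (x 0 / x 1) (φ K) := by
      have h2 := eval₂_comp_left (Polynomial.evalRingHom (x 0 / x 1))
        (algebraMap ℂ (Polynomial ℂ)) ![Polynomial.X, 1] K
      rw [φ, aeval_def]
      rw [show Polynomial.eval (x 0 / x 1)
        (eval₂ (algebraMap ℂ (Polynomial ℂ)) ![Polynomial.X, 1] K)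
        = (Polynomial.evalRingHom (x 0 / x 1))
          (eval₂ (algebraMap ℂ (Polynomial ℂ)) ![Polynomial.X, 1] K) from rfl, h2]
      have hF : (Polynomial.evalRingHom (x 0 / x 1)).comp (algebraMap ℂ (Polynomial ℂ))
          = RingHom.id ℂ := by ext a; simp
      have hG : (⇑(Polynomial.evalRingHom (x 0 / x 1)) ∘ ![Polynomial.X, 1])
          = ![x 0 / x 1, 1] := by funext i; fin_cases i <;> simp
      rw [hF, hG]
      rfl
    rw [hcomp, h]
    simp
  have hall : ∀ x : Fin 2 → ℂ, eval x (X 1 * K) = 0 := by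
    intro x
    rw [map_mul, eval_X]
    by_cases hx : x 1 = 0
    · rw [hx, zero_mul]
    · rw [heval x hx, mul_zero]
  have : (X 1 * K : MvPolynomial (Fin 2) ℂ) = 0 :=
    IsHomogeneous.eq_zero_of_forall_eval_eq_zero ((isHomogeneous_X ℂ 1).mul hK) hall
  exact (mul_eq_zero.mp this).resolve_left (X_ne_zero 1)

/-- On `ℂ[x,y]` (with `x = X 0`, `y = X 1`), let `ω₂ = P dx + Q dy` with `P, Q`
homogeneous of degree `ν`, not both zero, and `x·P + y·Q ≢ 0` (not the radial
foliation).  Two nonzero homogeneous first integrals `H, H̃` of degree `N+1 ≥ 1`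
(i.e. `H_x Q - H_y P = 0`) are proportional. -/
theorem stmt0 (ν N : ℕ) (P Q H H' : MvPolynomial (Fin 2) ℂ)
    (hP : P.IsHomogeneous ν) (hQ : Q.IsHomogeneous ν)
    (hPQ : ¬(P = 0 ∧ Q = 0))
    (hrad : X 0 * P + X 1 * Q ≠ 0)
    (hH : H.IsHomogeneous (N + 1)) (hH' : H'.IsHomogeneous (N + 1))
    (hHne : H ≠ 0) (hH'ne : H' ≠ 0)
    (hint : pderiv 0 H * Q - pderiv 1 H * P = 0)
    (hint' : pderiv 0 H' * Q - pderiv 1 H' * P = 0) :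
    ∃ c : ℂ, H = c • H' := by
  set E : MvPolynomial (Fin 2) ℂ := X 0 * P + X 1 * Q with hE
  have h1 : pderiv 0 H * E = C ((N + 1 : ℕ) : ℂ) * H * P := by
    linear_combination P * euler hH + X 1 * hint
  have h1' : pderiv 0 H' * E = C ((N + 1 : ℕ) : ℂ) * H' * P := by
    linear_combination P * euler hH' + X 1 * hint'
  have key0 : (pderiv 0 H * H' - pderiv 0 H' * H) * E = 0 := by
    linear_combination H' * h1 - H * h1'
  have key : pderiv 0 H * H' = pderiv 0 H' * H :=
    sub_eq_zero.mp ((mul_eq_zero.mp key0).resolve_right hrad)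
  have hfne : φ H ≠ 0 := fun h0 => hHne (phi_inj hH h0)
  have hgne : φ H' ≠ 0 := fun h0 => hH'ne (phi_inj hH' h0)
  have hrel : φ H * Polynomial.derivative (φ H') = Polynomial.derivative (φ H) * φ H' := by
    have hmap := congrArg φ key
    rw [map_mul, map_mul, phi_pderiv, phi_pderiv] at hmap
    linear_combination -hmap
  obtain ⟨c, hc⟩ := onevar hfne hgne hrel
  have hs : (c • H').IsHomogeneous (N + 1) := by
    rw [smul_eq_C_mul]; exact hH'.C_mul c
  have hsub : φ (H - c • H') = 0 := by
    rw [map_sub, map_smul, hc, sub_self]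
  have hzero : H - c • H' = 0 := phi_inj (hH.sub hs) hsub
  exact ⟨c, sub_eq_zero.mp hzero⟩
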